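/- Let λ > 0, let T_1, …, T_n be independent exponentially distributed random variables with rate λ, and let c_1, …, c_n be real constants. Let M := max_{1 ≤ i ≤ n} (T_i − c_i). Then the probability that there exist at least two distinct indices i with T_i − c_i ≥ M − 1 is at most 1 − e^{−λ}. -/

import Mathlib

open MeasureTheory ProbabilityTheory

namespace Stmt11Aux

/-- Uniform survival formula for an exponential law. -/
lemma surv (ν : Measure ℝ) [IsProbabilityMeasure ν] {lam : ℝ}
    (h : ∀ t : ℝ, 0 ≤ t → ν (Set.Ioi t) = ENNReal.ofReal (Real.exp (-(lam * t))))
    (s : ℝ) : ν (Set.Ioi s) = ENNReal.ofReal (Real.exp (-(lam * max s 0))) := by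
  rcases le_or_gt 0 s with hs | hs
  · rw [max_eq_left hs]; exact h s hs
  · rw [max_eq_right hs.le]
    have h0 : ν (Set.Ioi (0:ℝ)) = 1 := by
      rw [h 0 le_rfl]; simp
    have h1 : ν (Set.Ioi s) = 1 :=
      le_antisymm prob_le_one (h0 ▸ measure_mono (Set.Ioi_subset_Ioi hs.le))
    rw [h1]; simp

lemma shift (ν : Measure ℝ) [IsProbabilityMeasure ν] {lam : ℝ} (hlam : 0 < lam)
    (h : ∀ t : ℝ, 0 ≤ t → ν (Set.Ioi t) = ENNReal.ofReal (Real.exp (-(lam * t))))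
    (s : ℝ) :
    ENNReal.ofReal (Real.exp (-lam)) * ν (Set.Ioi s) ≤ ν (Set.Ioi (s + 1)) := by
  rw [surv ν h s, surv ν h (s+1), ← ENNReal.ofReal_mul (Real.exp_pos _).le, ← Real.exp_add]
  apply ENNReal.ofReal_le_ofReal
  apply Real.exp_le_exp.2
  have h1 : max (s+1) 0 ≤ 1 + max s 0 :=
    max_le (by linarith [le_max_left s 0]) (by positivity)
  nlinarith [le_max_right s 0]

lemma atom (ν : Measure ℝ) [IsProbabilityMeasure ν] {lam : ℝ}
    (h : ∀ t : ℝ, 0 ≤ t → ν (Set.Ioi t) = ENNReal.ofReal (Real.exp (-(lam * t))))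
    (s : ℝ) : ν {s} = 0 := by
  have key : ∀ ε : ℝ, 0 < ε → (ν {s}).toReal ≤
      Real.exp (-(lam * max (s - ε) 0)) - Real.exp (-(lam * max s 0)) := by
    intro ε hε
    have hsub : {s} ∪ Set.Ioi s ⊆ Set.Ioi (s - ε) := by
      intro x hx
      rcases hx with hx | hx
      · simp only [Set.mem_singleton_iff] at hx
        subst hx; simp only [Set.mem_Ioi]; linarith
      · exact lt_trans (by linarith : s - ε < s) hx
    have hdisj : Disjoint ({s} : Set ℝ) (Set.Ioi s) := by
      simp [Set.disjoint_left]
    have hunion : ν ({s} ∪ Set.Ioi s) = ν {s} + ν (Set.Ioi s) :=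
      measure_union hdisj measurableSet_Ioi
    have hle : ν {s} + ν (Set.Ioi s) ≤ ν (Set.Ioi (s - ε)) :=
      hunion ▸ measure_mono hsub
    have hle' : (ν {s}).toReal + (ν (Set.Ioi s)).toReal ≤ (ν (Set.Ioi (s - ε))).toReal := by
      rw [← ENNReal.toReal_add (measure_ne_top ν _) (measure_ne_top ν _)]
      exact ENNReal.toReal_mono (measure_ne_top ν _) hle
    rw [surv ν h s, surv ν h (s - ε)] at hle'
    rw [ENNReal.toReal_ofReal (Real.exp_pos _).le, ENNReal.toReal_ofReal (Real.exp_pos _).le]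
      at hle'
    linarith
  have htend : Filter.Tendsto
      (fun ε : ℝ => Real.exp (-(lam * max (s - ε) 0)) - Real.exp (-(lam * max s 0)))
      (nhdsWithin 0 (Set.Ioi 0)) (nhds 0) := by
    have hc : Continuous fun ε : ℝ =>
        Real.exp (-(lam * max (s - ε) 0)) - Real.exp (-(lam * max s 0)) := by
      fun_prop
    have h0 := hc.tendsto 0
    have : Real.exp (-(lam * max (s - 0) 0)) - Real.exp (-(lam * max s 0)) = 0 := by
      simp
    rw [this] at h0
    exact h0.mono_left nhdsWithin_le_nhds
  have hle0 : (ν {s}).toReal ≤ 0 :=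
    ge_of_tendsto htend (Filter.eventually_of_mem self_mem_nhdsWithin fun ε hε => key ε hε)
  have := le_antisymm hle0 ENNReal.toReal_nonneg
  rcases (ENNReal.toReal_eq_zero_iff _).mp this with h' | h'
  · exact h'
  · exact absurd h' (measure_ne_top ν _)

lemma meas_pair {Ω : Type} [MeasurableSpace Ω] {μ : Measure Ω} [IsProbabilityMeasure μ]
    {γ : Type} [MeasurableSpace γ] {X : Ω → ℝ} {Y : Ω → γ}
    (hX : Measurable X) (hY : Measurable Y) (hind : IndepFun Y X μ)
    {S : Set (γ × ℝ)} (hS : MeasurableSet S) :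
    μ {ω | (Y ω, X ω) ∈ S} = ∫⁻ y, (μ.map X) (Prod.mk y ⁻¹' S) ∂(μ.map Y) := by
  haveI : IsProbabilityMeasure (μ.map X) := Measure.isProbabilityMeasure_map hX.aemeasurable
  haveI : IsProbabilityMeasure (μ.map Y) := Measure.isProbabilityMeasure_map hY.aemeasurable
  have hmap : μ.map (fun ω => (Y ω, X ω)) = (μ.map Y).prod (μ.map X) :=
    (indepFun_iff_map_prod_eq_prod_map_map hY.aemeasurable hX.aemeasurable).mp hind
  have hset : {ω | (Y ω, X ω) ∈ S} = (fun ω => (Y ω, X ω)) ⁻¹' S := rfl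
  rw [hset, ← Measure.map_apply (hY.prodMk hX) hS, hmap, Measure.prod_apply hS]

lemma tie {Ω : Type} [MeasurableSpace Ω] {μ : Measure Ω} [IsProbabilityMeasure μ]
    {X Y : Ω → ℝ} (hX : Measurable X) (hY : Measurable Y)
    (hind : IndepFun Y X μ) (hatom : ∀ s : ℝ, μ.map X {s} = 0) (d : ℝ) :
    μ {ω | X ω = Y ω + d} = 0 := by
  have hS : MeasurableSet {p : ℝ × ℝ | p.2 = p.1 + d} :=
    measurableSet_eq_fun measurable_snd (measurable_fst.add_const d)
  have heq : {ω | X ω = Y ω + d} = {ω | (Y ω, X ω) ∈ {p : ℝ × ℝ | p.2 = p.1 + d}} := rfl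
  rw [heq, meas_pair hX hY hind hS]
  have hsl : ∀ y : ℝ, (Prod.mk y ⁻¹' {p : ℝ × ℝ | p.2 = p.1 + d}) = {y + d} := by
    intro y; ext x; simp [Set.mem_preimage, eq_comm]
  simp only [hsl, hatom]
  simp

end Stmt11Aux

open Stmt11Aux

/-- Let `T 1, …, T n` be independent exponential random variables with
rate `λ > 0` and `c i` real constants, and let `M = max_i (T i - c i)`. The probability
that at least two distinct indices `i` satisfy `T i - c i ≥ M - 1` is at most
`1 - e^{-λ}`. -/
theorem stmt_11 {Ω : Type} [MeasurableSpace Ω] (μ : Measure Ω) [IsProbabilityMeasure μ]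
    (lam : ℝ) (hlam : 0 < lam) (n : ℕ) (hn : 0 < n)
    (T : Fin n → Ω → ℝ) (c : Fin n → ℝ)
    (hmeas : ∀ i, Measurable (T i))
    (hindep : iIndepFun T μ)
    (hexp : ∀ i, ∀ t : ℝ, 0 ≤ t →
      μ {ω | t < T i ω} = ENNReal.ofReal (Real.exp (-(lam * t)))) :
    μ {ω | ∃ i j : Fin n, i ≠ j ∧
        (⨆ k : Fin n, (T k ω - c k)) - 1 ≤ T i ω - c i ∧
        (⨆ k : Fin n, (T k ω - c k)) - 1 ≤ T j ω - c j} ≤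
      ENNReal.ofReal (1 - Real.exp (-lam)) := by
  classical
  rcases Nat.lt_or_ge n 2 with h2 | h2
  · -- n = 1 : the event is empty
    have hset : {ω | ∃ i j : Fin n, i ≠ j ∧
        (⨆ k : Fin n, (T k ω - c k)) - 1 ≤ T i ω - c i ∧
        (⨆ k : Fin n, (T k ω - c k)) - 1 ≤ T j ω - c j} = ∅ := by
      ext ω
      simp only [Set.mem_setOf_eq, Set.mem_empty_iff_false, iff_false]
      rintro ⟨i, j, hij, -⟩
      have hn1 : n = 1 := by omega
      subst hn1
      exact hij (Subsingleton.elim i j)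
    rw [hset]
    simp
  · haveI : NeZero n := ⟨by omega⟩
    haveI : Nontrivial (Fin n) :=
      ⟨⟨⟨0, by omega⟩, ⟨1, by omega⟩, by simp [Fin.ext_iff]⟩⟩
    -- laws of the T i
    have hν : ∀ i, ∀ t : ℝ, 0 ≤ t →
        (μ.map (T i)) (Set.Ioi t) = ENNReal.ofReal (Real.exp (-(lam * t))) := by
      intro i t ht
      rw [Measure.map_apply (hmeas i) measurableSet_Ioi]
      exact hexp i t ht
    haveI hνprob : ∀ i, IsProbabilityMeasure (μ.map (T i)) := fun i =>
      Measure.isProbabilityMeasure_map (hmeas i).aemeasurable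
    -- the good events
    set A : Fin n → Set Ω :=
      fun i => {ω | ∀ j, j ≠ i → T j ω - c j + 1 < T i ω - c i} with hA
    set B : Fin n → Set Ω :=
      fun i => {ω | ∀ j, j ≠ i → T j ω - c j < T i ω - c i} with hB
    have hAmeas : ∀ i, MeasurableSet (A i) := by
      intro i
      have : A i = ⋂ j, ⋂ (_ : j ≠ i), {ω | T j ω - c j + 1 < T i ω - c i} := by
        ext ω; simp [hA]
      rw [this]
      exact MeasurableSet.iInter fun j => MeasurableSet.iInter fun _ =>
        measurableSet_lt (((hmeas j).sub_const _).add_const _) ((hmeas i).sub_const _)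
    have hBmeas : ∀ i, MeasurableSet (B i) := by
      intro i
      have : B i = ⋂ j, ⋂ (_ : j ≠ i), {ω | T j ω - c j < T i ω - c i} := by
        ext ω; simp [hB]
      rw [this]
      exact MeasurableSet.iInter fun j => MeasurableSet.iInter fun _ =>
        measurableSet_lt ((hmeas j).sub_const _) ((hmeas i).sub_const _)
    have hdisjA : Pairwise (Function.onFun Disjoint A) := by
      intro i j hij
      rw [Function.onFun, Set.disjoint_left]
      intro ω hi hj
      have h1 := hi j (Ne.symm hij)
      have h2 := hj i hij
      linarith
    have hdisjB : Pairwise (Function.onFun Disjoint B) := by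
      intro i j hij
      rw [Function.onFun, Set.disjoint_left]
      intro ω hi hj
      have h1 := hi j (Ne.symm hij)
      have h2 := hj i hij
      linarith
    -- key inequality
    have key : ∀ i, ENNReal.ofReal (Real.exp (-lam)) * μ (B i) ≤ μ (A i) := by
      intro i
      have hne : (Finset.univ : Finset ((({i}ᶜ : Finset (Fin n)) : Finset (Fin n)))).Nonempty := by
        obtain ⟨j, hj⟩ := exists_ne i
        exact ⟨⟨j, by simp [hj]⟩, Finset.mem_univ _⟩
      set Y : Ω → (({i}ᶜ : Finset (Fin n)) → ℝ) := fun ω k => T k ω with hY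
      set g : (({i}ᶜ : Finset (Fin n)) → ℝ) → ℝ :=
        fun v => (Finset.univ.sup' hne fun k => v k - c k) + c i with hg
      have hgmeas : Measurable g := by
        apply Measurable.add_const
        have heq : (fun v : (({i}ᶜ : Finset (Fin n)) → ℝ) =>
            Finset.univ.sup' hne fun k => v k - c k) =
            Finset.univ.sup' hne (fun k v => v k - c k) := by
          funext v
          rw [Finset.sup'_apply]
        rw [heq]
        exact Finset.measurable_sup' hne fun k _ => (measurable_pi_apply k).sub_const _
      have hYmeas : Measurable Y := measurable_pi_lambda _ fun k => hmeas k
      have hind : IndepFun Y (T i) μ := by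
        have h1 := hindep.indepFun_finset ({i}ᶜ) {i} (by simp) hmeas
        have h2 := h1.comp measurable_id
          (measurable_pi_apply (⟨i, Finset.mem_singleton_self i⟩ : ({i} : Finset (Fin n))))
        exact h2
      -- membership characterizations
      have hmemA : ∀ ω, ω ∈ A i ↔ g (Y ω) + 1 < T i ω := by
        intro ω
        rw [hg]
        simp only [hA, Set.mem_setOf_eq]
        constructor
        · intro h
          have hsup : (Finset.univ.sup' hne fun k : (({i}ᶜ : Finset (Fin n)) : Finset (Fin n)) =>
              Y ω k - c k) < T i ω - c i - 1 := by
            rw [Finset.sup'_lt_iff]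
            intro k _
            have hk : (k : Fin n) ≠ i := by
              have hk2 := k.2
              simp only [Finset.mem_compl, Finset.mem_singleton] at hk2
              exact hk2
            have := h k hk
            simp only [hY]
            linarith
          linarith
        · intro h j hj
          have hmem : j ∈ ({i}ᶜ : Finset (Fin n)) := by simp [hj]
          have hsup : (Finset.univ.sup' hne fun k : (({i}ᶜ : Finset (Fin n)) : Finset (Fin n)) =>
              Y ω k - c k) < T i ω - c i - 1 := by linarith
          rw [Finset.sup'_lt_iff] at hsup
          have := hsup ⟨j, hmem⟩ (Finset.mem_univ _)
          simp only [hY] at this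
          linarith
      have hmemB : ∀ ω, ω ∈ B i ↔ g (Y ω) < T i ω := by
        intro ω
        rw [hg]
        simp only [hB, Set.mem_setOf_eq]
        constructor
        · intro h
          have hsup : (Finset.univ.sup' hne fun k : (({i}ᶜ : Finset (Fin n)) : Finset (Fin n)) =>
              Y ω k - c k) < T i ω - c i := by
            rw [Finset.sup'_lt_iff]
            intro k _
            have hk : (k : Fin n) ≠ i := by
              have hk2 := k.2
              simp only [Finset.mem_compl, Finset.mem_singleton] at hk2
              exact hk2
            have := h k hk
            simp only [hY]
            linarith
          linarith
        · intro h j hj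
          have hmem : j ∈ ({i}ᶜ : Finset (Fin n)) := by simp [hj]
          have hsup : (Finset.univ.sup' hne fun k : (({i}ᶜ : Finset (Fin n)) : Finset (Fin n)) =>
              Y ω k - c k) < T i ω - c i := by linarith
          rw [Finset.sup'_lt_iff] at hsup
          have := hsup ⟨j, hmem⟩ (Finset.mem_univ _)
          simp only [hY] at this
          linarith
      have hSA : MeasurableSet {p : (({i}ᶜ : Finset (Fin n)) → ℝ) × ℝ | g p.1 + 1 < p.2} :=
        measurableSet_lt ((hgmeas.comp measurable_fst).add_const 1) measurable_snd
      have hSB : MeasurableSet {p : (({i}ᶜ : Finset (Fin n)) → ℝ) × ℝ | g p.1 < p.2} :=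
        measurableSet_lt (hgmeas.comp measurable_fst) measurable_snd
      have hAmap : μ (A i) = ∫⁻ y, (μ.map (T i)) (Set.Ioi (g y + 1)) ∂(μ.map Y) := by
        have : A i = {ω | (Y ω, T i ω) ∈
            {p : (({i}ᶜ : Finset (Fin n)) → ℝ) × ℝ | g p.1 + 1 < p.2}} := by
          ext ω; rw [hmemA ω]; rfl
        rw [this, meas_pair (hmeas i) hYmeas hind hSA]
        rfl
      have hBmap : μ (B i) = ∫⁻ y, (μ.map (T i)) (Set.Ioi (g y)) ∂(μ.map Y) := by
        have : B i = {ω | (Y ω, T i ω) ∈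
            {p : (({i}ᶜ : Finset (Fin n)) → ℝ) × ℝ | g p.1 < p.2}} := by
          ext ω; rw [hmemB ω]; rfl
        rw [this, meas_pair (hmeas i) hYmeas hind hSB]
        rfl
      calc ENNReal.ofReal (Real.exp (-lam)) * μ (B i)
          = ∫⁻ y, ENNReal.ofReal (Real.exp (-lam)) *
              (μ.map (T i)) (Set.Ioi (g y)) ∂(μ.map Y) := by
            rw [hBmap, lintegral_const_mul' _ _ ENNReal.ofReal_ne_top]
        _ ≤ ∫⁻ y, (μ.map (T i)) (Set.Ioi (g y + 1)) ∂(μ.map Y) :=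
            lintegral_mono fun y => shift (μ.map (T i)) hlam (hν i) (g y)
        _ = μ (A i) := hAmap.symm
    -- the event is disjoint from each A i
    have hEsub : {ω | ∃ i j : Fin n, i ≠ j ∧
        (⨆ k : Fin n, (T k ω - c k)) - 1 ≤ T i ω - c i ∧
        (⨆ k : Fin n, (T k ω - c k)) - 1 ≤ T j ω - c j} ⊆ (⋃ i, A i)ᶜ := by
      intro ω hω
      simp only [Set.mem_compl_iff, Set.mem_iUnion, not_exists]
      intro i hAi
      obtain ⟨p, q, hpq, hp, hq⟩ := hω
      have hAi' : ∀ j, j ≠ i → T j ω - c j + 1 < T i ω - c i := hAi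
      have hM : (⨆ k : Fin n, (T k ω - c k)) = T i ω - c i := by
        apply le_antisymm
        · refine ciSup_le fun k => ?_
          rcases eq_or_ne k i with rfl | hk
          · exact le_rfl
          · linarith [hAi' k hk]
        · exact le_ciSup (f := fun k : Fin n => T k ω - c k)
            (Set.Finite.bddAbove (Set.finite_range _)) i
      rw [hM] at hp hq
      rcases ne_or_eq p i with hpi | rfl
      · linarith [hAi' p hpi]
      · linarith [hAi' q (Ne.symm hpq)]
    -- the B i's cover almost everything
    have hBfull : μ (⋃ i, B i) = 1 := by
      rw [← prob_compl_eq_zero_iff (MeasurableSet.iUnion hBmeas)]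
      have hcompl : (⋃ i, B i)ᶜ ⊆
          ⋃ i, ⋃ j, ⋃ (_ : i ≠ j), {ω | T i ω - c i = T j ω - c j} := by
        intro ω hω
        simp only [Set.mem_compl_iff, Set.mem_iUnion, not_exists] at hω
        obtain ⟨i0, -, hmax⟩ := Finset.exists_max_image Finset.univ
          (fun k => T k ω - c k) Finset.univ_nonempty
        have hω0 : ¬ (∀ j, j ≠ i0 → T j ω - c j < T i0 ω - c i0) := fun hcon => hω i0 hcon
        push_neg at hω0
        obtain ⟨j, hj, hle⟩ := hω0
        refine Set.mem_iUnion.mpr ⟨i0, Set.mem_iUnion.mpr ⟨j, Set.mem_iUnion.mpr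
          ⟨Ne.symm hj, ?_⟩⟩⟩
        exact le_antisymm hle (hmax j (Finset.mem_univ _))
      refine measure_mono_null hcompl ?_
      refine measure_iUnion_null fun i => measure_iUnion_null fun j =>
        measure_iUnion_null fun hij => ?_
      have hindij : IndepFun (T j) (T i) μ := (hindep.indepFun hij).symm
      have hatom : ∀ s : ℝ, (μ.map (T i)) {s} = 0 := fun s =>
        atom (μ.map (T i)) (hν i) s
      have hset : {ω | T i ω - c i = T j ω - c j} =
          {ω | T i ω = T j ω + (c i - c j)} := by
        ext ω; constructor <;> intro h <;> simp only [Set.mem_setOf_eq] at * <;> linarith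
      rw [hset]
      exact tie (hmeas i) (hmeas j) hindij hatom (c i - c j)
    have hsumB : ∑ i, μ (B i) = 1 := by
      rw [← hBfull, measure_iUnion hdisjB hBmeas, tsum_fintype]
    have hsumA : μ (⋃ i, A i) = ∑ i, μ (A i) := by
      rw [measure_iUnion hdisjA hAmeas, tsum_fintype]
    have hstep : ENNReal.ofReal (Real.exp (-lam)) ≤ μ (⋃ i, A i) := by
      calc ENNReal.ofReal (Real.exp (-lam))
          = ENNReal.ofReal (Real.exp (-lam)) * ∑ i, μ (B i) := by rw [hsumB, mul_one]
        _ = ∑ i, ENNReal.ofReal (Real.exp (-lam)) * μ (B i) := Finset.mul_sum _ _ _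
        _ ≤ ∑ i, μ (A i) := Finset.sum_le_sum fun i _ => key i
        _ = μ (⋃ i, A i) := hsumA.symm
    calc μ {ω | ∃ i j : Fin n, i ≠ j ∧
        (⨆ k : Fin n, (T k ω - c k)) - 1 ≤ T i ω - c i ∧
        (⨆ k : Fin n, (T k ω - c k)) - 1 ≤ T j ω - c j}
        ≤ μ ((⋃ i, A i)ᶜ) := measure_mono hEsub
      _ = 1 - μ (⋃ i, A i) := by
          rw [measure_compl (MeasurableSet.iUnion hAmeas) (measure_ne_top μ _), measure_univ]
      _ ≤ 1 - ENNReal.ofReal (Real.exp (-lam)) := tsub_le_tsub_left hstep 1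
      _ = ENNReal.ofReal (1 - Real.exp (-lam)) := by
          rw [ENNReal.ofReal_sub 1 (Real.exp_pos _).le, ENNReal.ofReal_one]
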